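/- (Alzer's inequality) For every integer n ≥ 1 and real r > 0, n/(n+1) < ((1/n)Σ_{i=1}^n i^r / ((1/(n+1))Σ_{i=1}^{n+1} i^r))^{1/r}. -/

import Mathlib

open Real

lemma lemA (n : ℕ) (hn : 1 ≤ n) :
    1 ≤ (((n:ℝ)+2)/((n:ℝ)+1)) * (((n:ℝ)*((n:ℝ)+2)/((n:ℝ)+1)^2))^n := by
  set a : ℝ := (n:ℝ) with ha
  have ha1 : (1:ℝ) ≤ a := by exact_mod_cast Nat.one_le_cast.mpr hn
  have hpos : 0 < a := by linarith
  have h1 : 0 < a + 1 := by linarith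
  have h2 : 0 < a + 2 := by linarith
  set y : ℝ := a*(a+2)/(a+1)^2 with hy'
  have hb : -2 ≤ -(1/(a+1)^2) := by
    have : 1/(a+1)^2 ≤ 1 := by
      rw [div_le_one (by positivity)]; nlinarith
    linarith
  have h := one_add_mul_le_pow hb (n+1)
  have hy : (1 + -(1/(a+1)^2)) = y := by
    rw [hy']; field_simp; ring
  rw [hy] at h
  have hcast : ((n+1 : ℕ) : ℝ) = a + 1 := by push_cast [ha]; ring
  rw [hcast] at h
  have hlhs : 1 + (a+1) * -(1/(a+1)^2) = a/(a+1) := by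
    field_simp
    ring
  rw [hlhs, pow_succ] at h
  -- h : a/(a+1) ≤ y^n * y
  have h3 : (a+1)/(a+2) ≤ y^n := by
    rw [div_le_iff₀ h2]
    calc a+1 = (a/(a+1)) * ((a+1)^2/a) := by field_simp
      _ ≤ (y^n * y) * ((a+1)^2/a) := mul_le_mul_of_nonneg_right h (by positivity)
      _ = y^n * (a+2) := by rw [hy']; field_simp
  calc (1:ℝ) = ((a+2)/(a+1)) * ((a+1)/(a+2)) := by field_simp
    _ ≤ ((a+2)/(a+1)) * y^n := mul_le_mul_of_nonneg_left h3 (by positivity)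

set_option maxHeartbeats 1000000 in
lemma lemB (n : ℕ) (hn : 1 ≤ n) (r : ℝ) (hr : 0 < r) :
    (((n:ℝ)+1)^r)^2 * ((n:ℝ)+1) ≤ ((n:ℝ)+2)^r * (((n:ℝ)+1)^r + (n:ℝ)^r * (n:ℝ)) := by
  set a : ℝ := (n:ℝ) with ha
  have ha1 : (1:ℝ) ≤ a := by exact_mod_cast Nat.one_le_cast.mpr hn
  have hpos : 0 < a := by linarith
  have h1 : 0 < a + 1 := by linarith
  have h2 : 0 < a + 2 := by linarith
  set x : ℝ := (a+2)/(a+1) with hx'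
  set y : ℝ := a*(a+2)/(a+1)^2 with hy'
  have hx0 : 0 < x := by positivity
  have hy0 : 0 < y := by positivity
  have hw : 1/(a+1) + a/(a+1) = 1 := by field_simp; ring
  have geo := Real.geom_mean_le_arith_mean2_weighted
    (by positivity : (0:ℝ) ≤ 1/(a+1)) (by positivity : (0:ℝ) ≤ a/(a+1))
    (le_of_lt (Real.rpow_pos_of_pos hx0 r)) (le_of_lt (Real.rpow_pos_of_pos hy0 r)) hw
  -- lower bound the geometric mean by 1
  have hgm : (1:ℝ) ≤ (x^r)^(1/(a+1)) * (y^r)^(a/(a+1)) := by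
    have e1 : (x^r)^(1/(a+1)) = x^(r*(1/(a+1))) := by
      rw [← Real.rpow_mul hx0.le]
    have e2 : (y^r)^(a/(a+1)) = (y^(n:ℕ))^(r*(1/(a+1))) := by
      rw [← Real.rpow_natCast y n, ← Real.rpow_mul hy0.le, ← Real.rpow_mul hy0.le, ← ha]
      congr 1
      field_simp
    rw [e1, e2, ← Real.mul_rpow hx0.le (by positivity)]
    have hxy : (1:ℝ) ≤ x * y^(n:ℕ) := lemA n hn
    calc (1:ℝ) = 1 ^ (r*(1/(a+1))) := (Real.one_rpow _).symm
      _ ≤ (x * y^(n:ℕ)) ^ (r*(1/(a+1))) := Real.rpow_le_rpow (by norm_num) hxy (by positivity)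
  have hsum : a + 1 ≤ x^r + a * y^r := by
    have := le_trans hgm geo
    have h' : (a+1) * 1 ≤ (a+1) * (1/(a+1) * x^r + a/(a+1) * y^r) :=
      mul_le_mul_of_nonneg_left this h1.le
    calc a + 1 = (a+1) * 1 := by ring
      _ ≤ (a+1) * (1/(a+1) * x^r + a/(a+1) * y^r) := h'
      _ = x^r + a * y^r := by field_simp
  have hxr : x^r = (a+2)^r/(a+1)^r := by rw [hx', Real.div_rpow h2.le h1.le]
  have hyr : y^r = a^r * (a+2)^r / ((a+1)^r)^2 := by
    rw [hy', Real.div_rpow (by positivity) (by positivity), Real.mul_rpow hpos.le h2.le,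
      sq ((a+1)), Real.mul_rpow h1.le h1.le, sq]
  rw [hxr, hyr] at hsum
  have hv : (0:ℝ) < (a+1)^r := Real.rpow_pos_of_pos h1 r
  calc ((a+1)^r)^2 * (a+1) ≤ ((a+1)^r)^2 * ((a+2)^r/(a+1)^r + a * (a^r*(a+2)^r/((a+1)^r)^2)) :=
        mul_le_mul_of_nonneg_left hsum (by positivity)
    _ = (a+2)^r * ((a+1)^r + a^r * a) := by field_simp

lemma lemC (n : ℕ) (hn : 1 ≤ n) (r : ℝ) (hr : 0 < r) :
    ((n:ℝ)+2)^r * (((n:ℝ)+1)^(r+1) - (n:ℝ)^(r+1)) ≤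
      ((n:ℝ)+1)^r * (((n:ℝ)+2)^(r+1) - ((n:ℝ)+1)^(r+1)) := by
  set a : ℝ := (n:ℝ) with ha
  have ha1 : (1:ℝ) ≤ a := by exact_mod_cast Nat.one_le_cast.mpr hn
  have hpos : 0 < a := by linarith
  have h1 : 0 < a + 1 := by linarith
  have h2 : 0 < a + 2 := by linarith
  have e0 : a^(r+1) = a^r * a := Real.rpow_add_one (ne_of_gt hpos) r
  have e1 : (a+1)^(r+1) = (a+1)^r * (a+1) := Real.rpow_add_one (ne_of_gt h1) r
  have e2 : (a+2)^(r+1) = (a+2)^r * (a+2) := Real.rpow_add_one (ne_of_gt h2) r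
  rw [e0, e1, e2]
  nlinarith [lemB n hn r hr]

lemma lemD (r : ℝ) (hr : 0 < r) :
    ∀ n : ℕ, 1 ≤ n →
      (n:ℝ)^(r+1) * ((n:ℝ)+1)^r <
        (∑ i ∈ Finset.Icc 1 n, (i:ℝ)^r) * (((n:ℝ)+1)^(r+1) - (n:ℝ)^(r+1)) := by
  intro n
  induction n with
  | zero => intro h; omega
  | succ m ih =>
    intro _
    rcases Nat.eq_zero_or_pos m with hm | hm
    · subst hm
      norm_num [Finset.Icc_self, Real.one_rpow]
      have h2 : ((2:ℝ))^(r+1) = 2^r * 2 := Real.rpow_add_one (by norm_num) r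
      have h1 : (1:ℝ) < 2^r := by
        rw [show (1:ℝ) = 2^(0:ℝ) by simp [Real.rpow_zero]]
        exact Real.rpow_lt_rpow_left_iff (by norm_num) |>.mpr hr
      nlinarith
    · have ih' := ih hm
      have hc := lemC m hm r hr
      set a : ℝ := (m:ℝ) with ha
      have ha1 : (1:ℝ) ≤ a := by exact_mod_cast Nat.one_le_cast.mpr hm
      have hpos : 0 < a := by linarith
      have h1 : 0 < a + 1 := by linarith
      have h2 : 0 < a + 2 := by linarith
      have hsum : ∑ i ∈ Finset.Icc 1 (m+1), (i:ℝ)^r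
          = (∑ i ∈ Finset.Icc 1 m, (i:ℝ)^r) + ((m:ℝ)+1)^r := by
        rw [Finset.sum_Icc_succ_top (by omega : 1 ≤ m + 1)]
        push_cast
        ring_nf
      have hcast : ((m+1 : ℕ) : ℝ) = a + 1 := by push_cast [ha]; ring
      rw [hcast, hsum]
      have h21 : (a + 1) + 1 = a + 2 := by ring
      rw [h21]
      set S : ℝ := ∑ i ∈ Finset.Icc 1 m, (i:ℝ)^r with hS
      have hv1 : 0 < (a+1)^(r+1) - a^(r+1) := by
        have h : a^(r+1) < (a+1)^(r+1) :=
          Real.rpow_lt_rpow (le_of_lt hpos) (by linarith) (by linarith)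
        linarith
      have hw1 : 0 < (a+2)^(r+1) - (a+1)^(r+1) := by
        have h : (a+1)^(r+1) < (a+2)^(r+1) :=
          Real.rpow_lt_rpow (le_of_lt h1) (by linarith) (by linarith)
        linarith
      have h3 : a^(r+1) * (a+1)^r * ((a+2)^(r+1) - (a+1)^(r+1))
          < S * ((a+1)^(r+1) - a^(r+1)) * ((a+2)^(r+1) - (a+1)^(r+1)) :=
        mul_lt_mul_of_pos_right ih' hw1
      have h4 : (a+2)^r * ((a+1)^(r+1) - a^(r+1)) * (a+1)^(r+1)
          ≤ (a+1)^r * ((a+2)^(r+1) - (a+1)^(r+1)) * (a+1)^(r+1) :=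
        mul_le_mul_of_nonneg_right hc (le_of_lt (Real.rpow_pos_of_pos h1 _))
      have key : (a+1)^(r+1) * (a+2)^r * ((a+1)^(r+1) - a^(r+1))
          < (S + (a+1)^r) * ((a+2)^(r+1) - (a+1)^(r+1)) * ((a+1)^(r+1) - a^(r+1)) := by
        nlinarith [h3, h4]
      exact lt_of_mul_lt_mul_right key hv1.le

theorem stmt_16 (n : ℕ) (hn : 1 ≤ n) (r : ℝ) (hr : 0 < r) :
    (n : ℝ) / (n + 1) <
      (((∑ i ∈ Finset.Icc 1 n, (i : ℝ) ^ r) / n) /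
        ((∑ i ∈ Finset.Icc 1 (n + 1), (i : ℝ) ^ r) / (n + 1))) ^ (1 / r) := by
  have ha1 : (1:ℝ) ≤ (n:ℝ) := by exact_mod_cast Nat.one_le_cast.mpr hn
  set a : ℝ := (n:ℝ) with ha
  have hpos : 0 < a := by linarith
  have h1 : 0 < a + 1 := by linarith
  set S : ℝ := ∑ i ∈ Finset.Icc 1 n, (i:ℝ)^r with hSdef
  have hS : 0 < S := by
    apply Finset.sum_pos
    · intro i hi
      have : (1:ℕ) ≤ i := (Finset.mem_Icc.mp hi).1
      have h0 : 0 < (i:ℝ) := by exact_mod_cast Nat.lt_of_lt_of_le Nat.zero_lt_one this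
      exact Real.rpow_pos_of_pos h0 r
    · exact ⟨1, Finset.mem_Icc.mpr ⟨le_refl 1, hn⟩⟩
  have hsum : ∑ i ∈ Finset.Icc 1 (n+1), (i:ℝ)^r = S + (a+1)^r := by
    rw [Finset.sum_Icc_succ_top (by omega : 1 ≤ n + 1)]
    push_cast
    ring_nf
    rw [hSdef, ha]
  have hd := lemD r hr n hn
  have e0 : a^(r+1) = a^r * a := Real.rpow_add_one (ne_of_gt hpos) r
  have e1 : (a+1)^(r+1) = (a+1)^r * (a+1) := Real.rpow_add_one (ne_of_gt h1) r
  rw [← ha, e0, e1] at hd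
  have hP : 0 < (a+1)^r := Real.rpow_pos_of_pos h1 r
  have hQ : 0 < a^r := Real.rpow_pos_of_pos hpos r
  have hkey : (a/(a+1))^r < (S/a)/((S + (a+1)^r)/(a+1)) := by
    have hre : (S/a)/((S + (a+1)^r)/(a+1)) = (S*(a+1))/(a*(S + (a+1)^r)) := by
      field_simp
    rw [hre, Real.div_rpow hpos.le h1.le, div_lt_div_iff₀ (by positivity) (by positivity)]
    nlinarith [hd]
  rw [hsum]
  calc a/(a+1) = ((a/(a+1))^r)^(1/r) := by
        rw [← Real.rpow_mul (by positivity), mul_one_div, div_self (ne_of_gt hr),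
          Real.rpow_one]
    _ < ((S/a)/((S + (a+1)^r)/(a+1)))^(1/r) :=
        Real.rpow_lt_rpow (by positivity) hkey (by positivity)
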